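/- Let d_i, d_j, d_k > 0, let κ be a scalar, set S = d_j d_k + d_i d_k + d_i d_j and T = S + κ d_i d_j d_k, and assume T ≠ 0. Given scalars f₁, f₂, f₃, r, the 4×4 linear system (d_j + d_k + κd_jd_k)u₁ − d_k u₂ − d_j u₃ + d_jd_k p = f₁; −d_k u₁ + (d_i + d_k + κd_id_k)u₂ − d_i u₃ + d_id_k p = f₂; −d_j u₁ − d_i u₂ + (d_i + d_j + κd_id_j)u₃ + d_id_j p = f₃; d_jd_k u₁ + d_id_k u₂ + d_id_j u₃ = r, is solved by p = (f₁ + f₂ + f₃ − κr)/S, u₁ = (r + d_i f₁ − d_i d_j d_k p)/T, u₂ = (r + d_j f₂ − d_i d_j d_k p)/T, u₃ = (r + d_k f₃ − d_i d_j d_k p)/T, and this solution is unique. -/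

import Mathlib

/-- The per-mode 4×4 system of the 3D Maxwell fast solver:
with `d_i, d_j, d_k > 0`, `S = d_jd_k + d_id_k + d_id_j`, `T = S + κ d_id_jd_k ≠ 0`,
the explicit formulas for `p, u₁, u₂, u₃` solve the system, and the solution is
unique. -/
theorem stmt19 (di dj dk κ f1 f2 f3 r : ℝ)
    (hdi : 0 < di) (hdj : 0 < dj) (hdk : 0 < dk)
    (S T : ℝ)
    (hS : S = dj * dk + di * dk + di * dj)
    (hT : T = S + κ * (di * dj * dk))
    (hT0 : T ≠ 0)
    (p u1 u2 u3 : ℝ)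
    (hp : p = (f1 + f2 + f3 - κ * r) / S)
    (hu1 : u1 = (r + di * f1 - di * dj * dk * p) / T)
    (hu2 : u2 = (r + dj * f2 - di * dj * dk * p) / T)
    (hu3 : u3 = (r + dk * f3 - di * dj * dk * p) / T) :
    ((dj + dk + κ * dj * dk) * u1 - dk * u2 - dj * u3 + dj * dk * p = f1 ∧
     -(dk * u1) + (di + dk + κ * di * dk) * u2 - di * u3 + di * dk * p = f2 ∧
     -(dj * u1) - di * u2 + (di + dj + κ * di * dj) * u3 + di * dj * p = f3 ∧
     dj * dk * u1 + di * dk * u2 + di * dj * u3 = r) ∧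
    ∀ p' u1' u2' u3' : ℝ,
      ((dj + dk + κ * dj * dk) * u1' - dk * u2' - dj * u3' + dj * dk * p' = f1 ∧
       -(dk * u1') + (di + dk + κ * di * dk) * u2' - di * u3' + di * dk * p' = f2 ∧
       -(dj * u1') - di * u2' + (di + dj + κ * di * dj) * u3' + di * dj * p' = f3 ∧
       dj * dk * u1' + di * dk * u2' + di * dj * u3' = r) →
      p' = p ∧ u1' = u1 ∧ u2' = u2 ∧ u3' = u3 := by
  have hS0 : S ≠ 0 := by rw [hS]; positivity
  subst hS hp hu1 hu2 hu3
  constructor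
  · refine ⟨?_, ?_, ?_, ?_⟩ <;> field_simp <;> subst hT <;> ring
  · rintro p' u1' u2' u3' ⟨e1, e2, e3, e4⟩
    have hp' : p' = (f1 + f2 + f3 - κ * r) / (dj * dk + di * dk + di * dj) := by
      field_simp
      linear_combination e1 + e2 + e3 - κ * e4
    subst hp'
    field_simp at e1 e2 e3
    refine ⟨rfl, ?_, ?_, ?_⟩
    · field_simp
      subst hT
      linear_combination di * e1 + (dj * dk + di * dk + di * dj) * e4
    · field_simp
      subst hT
      linear_combination dj * e2 + (dj * dk + di * dk + di * dj) * e4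
    · field_simp
      subst hT
      linear_combination dk * e3 + (dj * dk + di * dk + di * dj) * e4
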